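/- Let k ≥ 1 be an integer, let ℓ ≥ 0 be a real number, let N be the disjoint union of finite sets O and Y each of size k, and let f : 2^N → ℝ be defined by f(S) = (|S ∩ O|/k)·(1 − |S ∩ Y|/k) + ( g(|S ∩ Y|/k) + ℓ·|S ∩ Y|/k² )·(1 − |S ∩ O|/k). Then f is submodular, i.e., f(A ∩ B) + f(A ∪ B) ≤ f(A) + f(B) for all A, B ⊆ N. -/

import Mathlib

section BadInstanceAux

private theorem hd0' (x : ℝ) (hx : x < 1) :
    HasDerivAt (fun x : ℝ => (x-1)*Real.log (1-x)) (Real.log (1-x) + 1) x := by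
  have h1 : HasDerivAt (fun x : ℝ => 1 - x) (-1) x := by
    exact (hasDerivAt_id' x).const_sub 1
  have h2 : HasDerivAt (fun x : ℝ => Real.log (1-x)) (-1/(1-x)) x := by
    simpa using h1.log (by linarith : (1:ℝ)-x ≠ 0)
  have h3 : HasDerivAt (fun y : ℝ => (y-1)*Real.log (1-y))
      ((1 - 0) * Real.log (1-x) + (x-1) * (-1/(1-x))) x :=
    (((hasDerivAt_id x).sub (hasDerivAt_const x 1)).mul h2 :)
  have hne : (1:ℝ) - x ≠ 0 := by linarith
  convert h3 using 1
  field_simp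
  ring

private theorem ha_mem' : (0:ℝ) < 1 - 1/Real.exp 1 ∧ (1 - 1/Real.exp 1 : ℝ) < 1 := by
  have h : (2:ℝ) ≤ Real.exp 1 := by have := Real.add_one_le_exp (1:ℝ); linarith
  have hpos : (0:ℝ) < Real.exp 1 := Real.exp_pos 1
  constructor
  · have : 1/Real.exp 1 ≤ 1/2 := by
      apply div_le_div_of_nonneg_left <;> linarith
    linarith
  · have : 0 < 1/Real.exp 1 := by positivity
    linarith

private theorem conc0' : ConcaveOn ℝ (Set.Icc (0:ℝ) (1 - 1/Real.exp 1))
    (fun x : ℝ => (x-1)*Real.log (1-x)) := by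
  have ha := ha_mem'
  have hsub : interior (Set.Icc (0:ℝ) (1 - 1/Real.exp 1)) ⊆ Set.Iio 1 := by
    rw [interior_Icc]; intro x hx; exact lt_trans hx.2 ha.2
  apply AntitoneOn.concaveOn_of_deriv (convex_Icc _ _)
  · intro x hx
    have hx1 : x < 1 := lt_of_le_of_lt hx.2 ha.2
    exact ((hd0' x hx1).continuousAt).continuousWithinAt
  · intro x hx
    exact (hd0' x (hsub hx)).differentiableAt.differentiableWithinAt
  · intro x hx y hy hxy
    rw [(hd0' x (hsub hx)).deriv, (hd0' y (hsub hy)).deriv]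
    have hy1 : y < 1 := hsub hy
    have : Real.log (1-y) ≤ Real.log (1-x) := by
      apply Real.log_le_log (by linarith) (by linarith)
    linarith

private theorem mono0' : MonotoneOn (fun x : ℝ => (x-1)*Real.log (1-x))
    (Set.Icc (0:ℝ) (1 - 1/Real.exp 1)) := by
  have ha := ha_mem'
  have hsub : interior (Set.Icc (0:ℝ) (1 - 1/Real.exp 1)) ⊆ Set.Iio 1 := by
    rw [interior_Icc]; intro x hx; exact lt_trans hx.2 ha.2
  apply monotoneOn_of_deriv_nonneg (convex_Icc _ _)
  · intro x hx
    have hx1 : x < 1 := lt_of_le_of_lt hx.2 ha.2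
    exact ((hd0' x hx1).continuousAt).continuousWithinAt
  · intro x hx
    exact (hd0' x (hsub hx)).differentiableAt.differentiableWithinAt
  · intro x hx
    rw [(hd0' x (hsub hx)).deriv]
    rw [interior_Icc] at hx
    have hlog : Real.log (Real.exp (-1)) ≤ Real.log (1-x) := by
      apply Real.log_le_log (Real.exp_pos _)
      rw [Real.exp_neg, ← one_div]
      linarith [hx.2]
    rw [Real.log_exp] at hlog
    linarith

/-- The piecewise function realized as a composition with `min`. -/
noncomputable def Gfun' : ℝ → ℝ :=
  fun x => (min x (1 - 1/Real.exp 1) - 1) * Real.log (1 - min x (1 - 1/Real.exp 1))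

private theorem himg' : (fun x : ℝ => min x (1 - 1/Real.exp 1)) '' Set.Icc 0 1
    = Set.Icc (0:ℝ) (1 - 1/Real.exp 1) := by
  have ha := ha_mem'
  ext y
  constructor
  · rintro ⟨x, hx, rfl⟩
    exact ⟨le_min hx.1 ha.1.le, min_le_right _ _⟩
  · intro hy
    exact ⟨y, ⟨hy.1, le_trans hy.2 ha.2.le⟩, min_eq_left hy.2⟩

private theorem concG' : ConcaveOn ℝ (Set.Icc (0:ℝ) 1) Gfun' := by
  have hmin : ConcaveOn ℝ (Set.Icc (0:ℝ) 1) (fun x : ℝ => min x (1 - 1/Real.exp 1)) := by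
    have h := (concaveOn_id (𝕜 := ℝ) (convex_Icc (0:ℝ) 1)).inf
      (concaveOn_const (1 - 1/Real.exp 1) (convex_Icc (0:ℝ) 1))
    exact h
  have := ConcaveOn.comp (f := fun x : ℝ => min x (1 - 1/Real.exp 1))
    (g := fun x : ℝ => (x-1)*Real.log (1-x)) (himg' ▸ conc0') hmin (himg' ▸ mono0')
  exact this

private theorem monoG' : MonotoneOn Gfun' (Set.Icc (0:ℝ) 1) := by
  have ha := ha_mem'
  intro x hx y hy hxy
  apply mono0' ⟨le_min hx.1 ha.1.le, min_le_right _ _⟩ ⟨le_min hy.1 ha.1.le, min_le_right _ _⟩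
  exact min_le_min_right _ hxy

private theorem chord' {G : ℝ → ℝ} (hG : ConcaveOn ℝ (Set.Icc (0:ℝ) 1) G)
    {p q r s : ℝ} (hp : p ∈ Set.Icc (0:ℝ) 1) (hs : s ∈ Set.Icc (0:ℝ) 1)
    (hpq : p ≤ q) (hpr : p ≤ r) (hsum : q + r = p + s) :
    G p + G s ≤ G q + G r := by
  rcases eq_or_lt_of_le (by linarith : p ≤ s) with heq | hlt
  · subst heq
    have hq : q = p := le_antisymm (by linarith) hpq
    have hr : r = p := by linarith
    rw [hq, hr]
  · set lam := (s - q) / (s - p) with hlam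
    set mu := (q - p) / (s - p) with hmu
    have hsp : 0 < s - p := by linarith
    have hql : q ≤ s := by linarith
    have h1 : 0 ≤ lam := div_nonneg (by linarith) (by linarith)
    have h2 : 0 ≤ mu := div_nonneg (by linarith) (by linarith)
    have h12 : lam + mu = 1 := by
      rw [hlam, hmu, ← add_div, div_eq_one_iff_eq (by linarith : s - p ≠ 0)]
      ring
    have hq : lam • p + mu • s = q := by
      simp only [smul_eq_mul, hlam, hmu]; field_simp; ring
    have hr : mu • p + lam • s = r := by
      simp only [smul_eq_mul, hlam, hmu]; field_simp; nlinarith [hsum]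
    have c1 := hG.2 hp hs h1 h2 h12
    have c2 := hG.2 hp hs h2 h1 (by linarith)
    rw [hq] at c1; rw [hr] at c2
    simp only [smul_eq_mul] at c1 c2
    have e : lam*G p + mu*G s + (mu*G p + lam*G s) = G p + G s := by
      linear_combination (G p + G s) * h12
    linarith [c1, c2, e]

private theorem key' {G : ℝ → ℝ} (hG : ConcaveOn ℝ (Set.Icc (0:ℝ) 1) G)
    (hm : MonotoneOn G (Set.Icc (0:ℝ) 1)) {c : ℝ} (hc : 0 ≤ c)
    {xi xa xb xu yi ya yb yu : ℝ}
    (hxi : 0 ≤ xi) (hxu : xu ≤ 1) (hxa : xi ≤ xa) (hxb : xi ≤ xb) (hxs : xi + xu = xa + xb)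
    (hyi : 0 ≤ yi) (hyu : yu ≤ 1) (hya : yi ≤ ya) (hyb : yi ≤ yb) (hys : yi + yu = ya + yb) :
    (xi*(1-yi) + (G yi + c*yi)*(1-xi)) + (xu*(1-yu) + (G yu + c*yu)*(1-xu)) ≤
      (xa*(1-ya) + (G ya + c*ya)*(1-xa)) + (xb*(1-yb) + (G yb + c*yb)*(1-xb)) := by
  have hyau : ya ≤ yu := by linarith
  have hybu : yb ≤ yu := by linarith
  have hxi1 : xi ≤ 1 := by linarith
  have hyimem : yi ∈ Set.Icc (0:ℝ) 1 := ⟨hyi, by linarith⟩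
  have hyamem : ya ∈ Set.Icc (0:ℝ) 1 := ⟨by linarith, by linarith⟩
  have hybmem : yb ∈ Set.Icc (0:ℝ) 1 := ⟨by linarith, by linarith⟩
  have hyumem : yu ∈ Set.Icc (0:ℝ) 1 := ⟨by linarith, hyu⟩
  have hD : G yi + G yu ≤ G ya + G yb := chord' hG hyimem hyumem hya hyb (by linarith)
  have m1 : G ya ≤ G yu := hm hyamem hyumem hyau
  have m2 : G yb ≤ G yu := hm hybmem hyumem hybu
  have hxu' : xu = xa + xb - xi := by linarith
  have hyu' : yu = ya + yb - yi := by linarith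
  subst hxu' hyu'
  have t1 : 0 ≤ (xa - xi) * ((ya + yb - yi - ya) + (G (ya + yb - yi) - G ya)
      + c*(ya + yb - yi - ya)) := by
    apply mul_nonneg (by linarith)
    have : 0 ≤ c * (yb - yi) := mul_nonneg hc (by linarith)
    linarith
  have t2 : 0 ≤ (xb - xi) * ((ya + yb - yi - yb) + (G (ya + yb - yi) - G yb)
      + c*(ya + yb - yi - yb)) := by
    apply mul_nonneg (by linarith)
    have : 0 ≤ c * (ya - yi) := mul_nonneg hc (by linarith)
    linarith
  have t3 : 0 ≤ (1 - xi) * ((G ya + G yb) - (G yi + G (ya + yb - yi))) := by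
    apply mul_nonneg (by linarith) (by linarith)
  nlinarith [t1, t2, t3]

end BadInstanceAux

/-- The objective function of the bad instance is submodular. -/
theorem bad_instance_submodular {N : Type*} [Fintype N] [DecidableEq N]
    (k : ℕ) (hk : 1 ≤ k) (l : ℝ) (hl : 0 ≤ l)
    (O Y : Finset N) (hdisj : Disjoint O Y) (hunion : O ∪ Y = Finset.univ)
    (hO : O.card = k) (hY : Y.card = k)
    (g : ℝ → ℝ)
    (hg1 : ∀ x ∈ Set.Icc (0 : ℝ) (1 - 1 / Real.exp 1),
      g x = (x - 1) * Real.log (1 - x))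
    (hg2 : ∀ x ∈ Set.Icc (1 - 1 / Real.exp 1) (1 : ℝ), g x = 1 / Real.exp 1)
    (f : Finset N → ℝ)
    (hf : ∀ S : Finset N,
      f S = ((S ∩ O).card : ℝ) / k * (1 - ((S ∩ Y).card : ℝ) / k)
        + (g (((S ∩ Y).card : ℝ) / k) + l * ((S ∩ Y).card : ℝ) / (k : ℝ) ^ 2)
          * (1 - ((S ∩ O).card : ℝ) / k)) :
    ∀ A B : Finset N, f (A ∩ B) + f (A ∪ B) ≤ f A + f B := by
  intro A B
  have hk0 : (0:ℝ) < (k:ℝ) := by exact_mod_cast Nat.pos_of_ne_zero (by omega)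
  -- g agrees with Gfun' on [0,1]
  have hgG : ∀ x ∈ Set.Icc (0:ℝ) 1, g x = Gfun' x := by
    intro x hx
    rcases le_total x (1 - 1/Real.exp 1) with h | h
    · rw [hg1 x ⟨hx.1, h⟩, Gfun', min_eq_left h]
    · rw [hg2 x ⟨h, hx.2⟩, Gfun', min_eq_right h]
      have h1 : (1:ℝ) - (1 - 1/Real.exp 1) = (Real.exp 1)⁻¹ := by rw [one_div]; ring
      rw [h1, Real.log_inv, Real.log_exp]
      ring
  -- cardinality facts
  have hdistI : ∀ T : Finset N, (A ∩ B) ∩ T = (A ∩ T) ∩ (B ∩ T) := by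
    intro T; ext x; simp only [Finset.mem_inter]; tauto
  have hdistU : ∀ T : Finset N, (A ∪ B) ∩ T = (A ∩ T) ∪ (B ∩ T) := by
    intro T; ext x; simp only [Finset.mem_inter, Finset.mem_union]; tauto
  have hcard : ∀ T : Finset N, ((A ∩ B) ∩ T).card + ((A ∪ B) ∩ T).card
      = (A ∩ T).card + (B ∩ T).card := by
    intro T; rw [hdistI T, hdistU T]; exact Finset.card_inter_add_card_union _ _
  have hleA : ∀ T : Finset N, ((A ∩ B) ∩ T).card ≤ (A ∩ T).card := by
    intro T; apply Finset.card_le_card; rw [hdistI T]; exact Finset.inter_subset_left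
  have hleB : ∀ T : Finset N, ((A ∩ B) ∩ T).card ≤ (B ∩ T).card := by
    intro T; apply Finset.card_le_card; rw [hdistI T]; exact Finset.inter_subset_right
  have hOk : ((A ∪ B) ∩ O).card ≤ k := by
    rw [← hO]; exact Finset.card_le_card Finset.inter_subset_right
  have hYk : ((A ∪ B) ∩ Y).card ≤ k := by
    rw [← hY]; exact Finset.card_le_card Finset.inter_subset_right
  -- real-number versions
  have hx0 : (0:ℝ) ≤ (((A ∩ B) ∩ O).card : ℝ) / k := by positivity
  have hx1 : (((A ∪ B) ∩ O).card : ℝ) / k ≤ 1 := by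
    rw [div_le_one hk0]; exact_mod_cast hOk
  have hxa : (((A ∩ B) ∩ O).card : ℝ) / k ≤ ((A ∩ O).card : ℝ) / k := by
    gcongr <;> first | exact Finset.inter_subset_left | exact_mod_cast hleA O
  have hxb : (((A ∩ B) ∩ O).card : ℝ) / k ≤ ((B ∩ O).card : ℝ) / k := by
    gcongr <;> first | exact Finset.inter_subset_right | exact_mod_cast hleB O
  have hxs : (((A ∩ B) ∩ O).card : ℝ) / k + (((A ∪ B) ∩ O).card : ℝ) / k
      = ((A ∩ O).card : ℝ) / k + ((B ∩ O).card : ℝ) / k := by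
    rw [← add_div, ← add_div]
    congr 1
    exact_mod_cast hcard O
  have hy0 : (0:ℝ) ≤ (((A ∩ B) ∩ Y).card : ℝ) / k := by positivity
  have hy1 : (((A ∪ B) ∩ Y).card : ℝ) / k ≤ 1 := by
    rw [div_le_one hk0]; exact_mod_cast hYk
  have hya : (((A ∩ B) ∩ Y).card : ℝ) / k ≤ ((A ∩ Y).card : ℝ) / k := by
    gcongr <;> first | exact Finset.inter_subset_left | exact_mod_cast hleA Y
  have hyb : (((A ∩ B) ∩ Y).card : ℝ) / k ≤ ((B ∩ Y).card : ℝ) / k := by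
    gcongr <;> first | exact Finset.inter_subset_right | exact_mod_cast hleB Y
  have hys : (((A ∩ B) ∩ Y).card : ℝ) / k + (((A ∪ B) ∩ Y).card : ℝ) / k
      = ((A ∩ Y).card : ℝ) / k + ((B ∩ Y).card : ℝ) / k := by
    rw [← add_div, ← add_div]
    congr 1
    exact_mod_cast hcard Y
  have hc : (0:ℝ) ≤ l / k := by positivity
  have hKEY := key' concG' monoG' hc hx0 hx1 hxa hxb hxs hy0 hy1 hya hyb hys
  -- memberships of the four y-values in [0,1]
  have hmemI : (((A ∩ B) ∩ Y).card : ℝ) / k ∈ Set.Icc (0:ℝ) 1 := ⟨hy0, by linarith⟩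
  have hmemU : (((A ∪ B) ∩ Y).card : ℝ) / k ∈ Set.Icc (0:ℝ) 1 := ⟨by positivity, hy1⟩
  have hmemA : ((A ∩ Y).card : ℝ) / k ∈ Set.Icc (0:ℝ) 1 := ⟨by positivity, by linarith⟩
  have hmemB : ((B ∩ Y).card : ℝ) / k ∈ Set.Icc (0:ℝ) 1 := ⟨by positivity, by linarith⟩
  have hterm : ∀ b : ℝ, l * b / (k:ℝ)^2 = (l / k) * (b / k) := by
    intro b; rw [div_mul_div_comm, ← pow_two]
  rw [hf (A ∩ B), hf (A ∪ B), hf A, hf B, hgG _ hmemI, hgG _ hmemU, hgG _ hmemA,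
    hgG _ hmemB, hterm, hterm, hterm, hterm]
  exact hKEY
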